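/- Suppose 0 < δ < res'(I)/(6n). Then the instance (T,((U_1,S_1),…,(U_k,S_k))) has a solution if and only if the instance (T',((U'_1,S'_1),…,(U'_k,S'_k))) has a solution. -/

import Mathlib

/-- `a` and `b` occur consecutively (in this order) in the list `l`. -/
def ConsecIn {V : Type*} (l : List V) (a b : V) : Prop :=
  ∃ m : ℕ, l[m]? = some a ∧ l[m + 1]? = some b

private lemma list_sum_const {α : Type*} (f : α → ℝ) (c : ℝ) :
    ∀ (lst : List α), (∀ e ∈ lst, f e = c) → (lst.map f).sum = c * lst.length := by
  intro lst h
  induction lst with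
  | nil => simp
  | cons a tl ih =>
    simp only [List.map_cons, List.sum_cons, List.length_cons, h a (by simp),
      ih (fun e he => h e (by simp [he]))]
    push_cast; ring

private lemma gadget_walk {V : Type*} [DecidableEq V] {T : SimpleGraph V}
    (L : V → List V) (hLnd : ∀ u, (L u).Nodup) (hLmem : ∀ u v, v ∈ L u ↔ T.Adj u v)
    {T' : SimpleGraph {p : V × V // T.Adj p.1 p.2}}
    (hT'adj : ∀ a b : {p : V × V // T.Adj p.1 p.2}, T'.Adj a b ↔
      ((a.1.1 = b.1.2 ∧ a.1.2 = b.1.1) ∨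
       (a.1.1 = b.1.1 ∧ (ConsecIn (L a.1.1) a.1.2 b.1.2 ∨ ConsecIn (L a.1.1) b.1.2 a.1.2))))
    (w' : Sym2 {p : V × V // T.Adj p.1 p.2} → ℝ) (δ' : ℝ)
    (hwpath : ∀ a b : {p : V × V // T.Adj p.1 p.2}, a.1.1 = b.1.1 → a ≠ b →
      w' s(a, b) = δ')
    (u x y : V) (hx : T.Adj u x) (hy : T.Adj u y) :
    ∃ q : T'.Walk ⟨(u,x),hx⟩ ⟨(u,y),hy⟩,
      (∀ z ∈ q.support, z.1.1 = u) ∧ q.support.Nodup ∧ q.length + 1 ≤ (L u).length ∧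
      (∀ e ∈ q.edges, w' e = δ') := by
  classical
  set l : List V := L u with hldef
  have hA : ∀ m (hm : m < l.length), T.Adj u (l[m]'hm) := fun m hm =>
    (hLmem u _).1 (List.getElem_mem hm)
  let A : ∀ m, m < l.length → {p : V × V // T.Adj p.1 p.2} := fun m hm =>
    ⟨(u, l[m]'hm), hA m hm⟩
  have helper : ∀ (t i j : ℕ), i + t = j → ∀ (hi : i < l.length) (hj : j < l.length),
      ∃ q : T'.Walk (A i hi) (A j hj),
        (q.support.map (fun z => z.1.2)) = ((l.drop i).take (t+1)) ∧
        q.length = t ∧ (∀ e ∈ q.edges, w' e = δ') ∧ (∀ z ∈ q.support, z.1.1 = u) := by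
    intro t
    induction t with
    | zero =>
      intro i j hij hi hj
      obtain rfl : i = j := by omega
      refine ⟨SimpleGraph.Walk.nil, ?_, rfl, by simp, by simp [A]⟩
      simp [List.take_succ, List.getElem?_drop, List.getElem?_eq_getElem hi, A]
    | succ t IH =>
      intro i j hij hi hj
      have hm : i + t < l.length := by omega
      obtain ⟨q', hs, hl, he, hfst⟩ := IH i (i + t) rfl hi hm
      obtain rfl : i + t + 1 = j := by omega
      have hadj : T'.Adj (A (i+t) hm) (A (i+t+1) hj) := by
        refine (hT'adj _ _).2 (Or.inr ⟨rfl, Or.inl ⟨i + t, ?_, ?_⟩⟩)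
        · simp [A, ← hldef, List.getElem?_eq_getElem hm]
        · simp [A, ← hldef, List.getElem?_eq_getElem hj]
      refine ⟨q'.concat hadj, ?_, by simp [hl], ?_, ?_⟩
      · rw [SimpleGraph.Walk.support_concat, List.map_append, hs]
        have : (l.drop i).take (t+1+1) = (l.drop i).take (t+1) ++ ((l.drop i)[t+1]?).toList :=
          List.take_succ
        rw [this, List.getElem?_drop]
        have h9 : l[i + (t+1)]? = some (l[i+t+1]'hj) := List.getElem?_eq_getElem hj
        rw [h9]
        simp [A]
      · intro e he'
        rw [SimpleGraph.Walk.edges_concat, List.concat_eq_append] at he'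
        rcases List.mem_append.1 he' with h1 | h1
        · exact he e h1
        · simp only [List.mem_singleton] at h1
          subst h1
          refine hwpath _ _ rfl ?_
          intro hcon
          have : l[i+t]'hm = l[i+t+1]'hj := by
            have := congrArg (fun z => z.1.2) hcon
            simpa [A] using this
          have := (List.Nodup.getElem_inj_iff (hLnd u)).1 this
          omega
      · intro z hz
        rw [SimpleGraph.Walk.support_concat] at hz
        rcases List.mem_append.1 hz with h1 | h1
        · exact hfst z h1
        · simp only [List.mem_singleton] at h1; subst h1; rfl
  obtain ⟨i, hi, hix⟩ := List.mem_iff_getElem.1 ((hLmem u x).2 hx)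
  obtain ⟨j, hj, hjy⟩ := List.mem_iff_getElem.1 ((hLmem u y).2 hy)
  have hslice : ∀ (a b : ℕ), ((l.drop a).take b).Nodup :=
    fun a b => ((List.take_sublist _ _).trans (List.drop_sublist _ _)).nodup (hLnd u)
  have hAx : A i hi = ⟨(u,x),hx⟩ := Subtype.ext (by simp [A]; exact hix)
  have hAy : A j hj = ⟨(u,y),hy⟩ := Subtype.ext (by simp [A]; exact hjy)
  have hlen : (L u).length = l.length := rfl
  rcases le_or_gt i j with hij | hij
  · obtain ⟨q, hs, hl, he, hfst⟩ := helper (j - i) i j (by omega) hi hj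
    refine ⟨(q.copy hAx hAy), ?_, ?_, ?_, ?_⟩
    · simpa using hfst
    · have : (q.support.map (fun z => z.1.2)).Nodup := hs ▸ hslice _ _
      simpa using this.of_map _
    · simp only [SimpleGraph.Walk.length_copy, hl, ← hldef]; omega
    · simpa using he
  · obtain ⟨q, hs, hl, he, hfst⟩ := helper (i - j) j i (by omega) hj hi
    refine ⟨(q.reverse.copy hAx hAy), ?_, ?_, ?_, ?_⟩
    · intro z hz
      simp only [SimpleGraph.Walk.support_copy, SimpleGraph.Walk.support_reverse,
        List.mem_reverse] at hz
      exact hfst z hz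
    · have : (q.support.map (fun z => z.1.2)).Nodup := hs ▸ hslice _ _
      have h2 := this.of_map _
      simp only [SimpleGraph.Walk.support_copy, SimpleGraph.Walk.support_reverse,
        List.nodup_reverse]
      exact h2
    · simp only [SimpleGraph.Walk.length_copy, SimpleGraph.Walk.length_reverse, hl, ← hldef]; omega
    · intro e he'
      simp only [SimpleGraph.Walk.edges_copy, SimpleGraph.Walk.edges_reverse,
        List.mem_reverse] at he'
      exact he e he'

private lemma key_walk {V : Type*} [DecidableEq V] {T : SimpleGraph V} {k : ℕ} {U : Fin k → Set V}
    (hcover : (⋃ i, U i) = Set.univ)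
    (hdisj : ∀ i j, i ≠ j → Disjoint (U i) (U j))
    (L : V → List V) (hLnd : ∀ u, (L u).Nodup) (hLmem : ∀ u v, v ∈ L u ↔ T.Adj u v)
    {T' : SimpleGraph {p : V × V // T.Adj p.1 p.2}}
    (hT'adj : ∀ a b : {p : V × V // T.Adj p.1 p.2}, T'.Adj a b ↔
      ((a.1.1 = b.1.2 ∧ a.1.2 = b.1.1) ∨
       (a.1.1 = b.1.1 ∧ (ConsecIn (L a.1.1) a.1.2 b.1.2 ∨ ConsecIn (L a.1.1) b.1.2 a.1.2))))
    (w : Sym2 V → ℝ)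
    (w' : Sym2 {p : V × V // T.Adj p.1 p.2} → ℝ) (δ δ' : ℝ)
    (hwsame : ∀ a b : {p : V × V // T.Adj p.1 p.2}, a.1.1 = b.1.2 → a.1.2 = b.1.1 →
      (∃ i, a.1.1 ∈ U i ∧ a.1.2 ∈ U i) → w' s(a, b) = w s(a.1.1, a.1.2))
    (hwdiff : ∀ a b : {p : V × V // T.Adj p.1 p.2}, a.1.1 = b.1.2 → a.1.2 = b.1.1 →
      (¬ ∃ i, a.1.1 ∈ U i ∧ a.1.2 ∈ U i) → w' s(a, b) = w s(a.1.1, a.1.2) - δ)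
    (hwpath : ∀ a b : {p : V × V // T.Adj p.1 p.2}, a.1.1 = b.1.1 → a ≠ b →
      w' s(a, b) = δ')
    (u v : V) (p : T.Walk u v) :
    p.IsPath → ∀ (x y : V) (hx : T.Adj u x) (hy : T.Adj v y),
    ∃ (q : T'.Walk ⟨(u,x),hx⟩ ⟨(v,y),hy⟩) (c G : ℕ),
      q.IsPath ∧ (∀ z ∈ q.support, z.1.1 ∈ p.support) ∧
      (q.edges.map w').sum = (p.edges.map w).sum - δ * c + δ' * G ∧
      c ≤ p.length ∧
      ((∀ dd ∈ p.darts, ∃ i, dd.toProd.1 ∈ U i ∧ dd.toProd.2 ∈ U i) → c = 0) ∧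
      ((¬ ∃ i, u ∈ U i ∧ v ∈ U i) → 1 ≤ c) ∧
      G + p.support.length ≤ (p.support.map fun z => (L z).length).sum := by
  classical
  have hrefl : ∀ z : V, ∃ i, z ∈ U i := by
    intro z
    have : z ∈ ⋃ i, U i := hcover ▸ Set.mem_univ z
    exact Set.mem_iUnion.1 this
  induction p with
  | nil =>
    intro _ x y hx hy
    obtain ⟨q, hfst, hnd, hlen, hew⟩ := gadget_walk L hLnd hLmem hT'adj w' δ' hwpath _ x y hx hy
    refine ⟨q, 0, q.length, (SimpleGraph.Walk.isPath_def q).2 hnd, ?_, ?_, le_refl _, fun _ => rfl,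
      ?_, ?_⟩
    · intro z hz; simp [hfst z hz]
    · rw [list_sum_const w' δ' q.edges hew]
      simp [SimpleGraph.Walk.length_edges]
    · intro hc
      obtain ⟨i, hi⟩ := hrefl _
      exact (hc ⟨i, hi, hi⟩).elim
    · simpa using hlen
  | @cons u u' v h p' ih =>
    intro hp x y hx hy
    rw [SimpleGraph.Walk.cons_isPath_iff] at hp
    obtain ⟨hp', hus⟩ := hp
    obtain ⟨q', c', G', hq'path, hq'mem, hq'w, hc'len, hc'0, hc'1, hG'⟩ :=
      ih hp' u y h.symm hy
    obtain ⟨qu, hufst, hund, hulen, huew⟩ :=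
      gadget_walk L hLnd hLmem hT'adj w' δ' hwpath u x u' hx h
    have ca : T'.Adj ⟨(u,u'),h⟩ ⟨(u',u),h.symm⟩ := (hT'adj _ _).2 (Or.inl ⟨rfl, rfl⟩)
    obtain ⟨b, hble, hwc, hb0, hb1⟩ :
        ∃ b : ℕ, b ≤ 1 ∧ w' s((⟨(u,u'),h⟩ : {p : V × V // T.Adj p.1 p.2}), ⟨(u',u),h.symm⟩)
            = w s(u,u') - δ * b ∧
          ((∃ i, u ∈ U i ∧ u' ∈ U i) → b = 0) ∧ ((¬ ∃ i, u ∈ U i ∧ u' ∈ U i) → b = 1) := by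
      by_cases hb : ∃ i, u ∈ U i ∧ u' ∈ U i
      · exact ⟨0, by omega, by rw [hwsame _ _ rfl rfl hb]; push_cast; ring,
          fun _ => rfl, fun hc => (hc hb).elim⟩
      · exact ⟨1, le_refl _, by rw [hwdiff _ _ rfl rfl hb]; push_cast; ring,
          fun hc => (hb hc).elim, fun _ => rfl⟩
    refine ⟨qu.append (SimpleGraph.Walk.cons ca q'), b + c', qu.length + G', ?_, ?_, ?_, ?_, ?_, ?_, ?_⟩
    · rw [SimpleGraph.Walk.isPath_def, SimpleGraph.Walk.support_append,
        SimpleGraph.Walk.support_cons, List.tail_cons]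
      refine List.Nodup.append hund (hq'path.support_nodup) ?_
      intro a ha ha'
      have h1 := hufst a ha
      have h2 := hq'mem a ha'
      rw [h1] at h2
      exact hus h2
    · intro z hz
      rw [SimpleGraph.Walk.support_append, SimpleGraph.Walk.support_cons, List.tail_cons] at hz
      rw [SimpleGraph.Walk.support_cons]
      rcases List.mem_append.1 hz with h1 | h1
      · simp [hufst z h1]
      · simp [hq'mem z h1]
    · rw [SimpleGraph.Walk.edges_append, SimpleGraph.Walk.edges_cons, List.map_append,
        List.map_cons, List.sum_append, List.sum_cons, list_sum_const w' δ' qu.edges huew,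
        SimpleGraph.Walk.length_edges, hq'w, SimpleGraph.Walk.edges_cons, List.map_cons,
        List.sum_cons, hwc]
      push_cast
      ring
    · rw [SimpleGraph.Walk.length_cons]; omega
    · intro hdd
      rw [SimpleGraph.Walk.darts_cons] at hdd
      have hb' := hb0 (hdd ⟨(u,u'),h⟩ List.mem_cons_self)
      have hc'' := hc'0 (fun dd hdd' => hdd dd (by simp [hdd']))
      omega
    · intro hnc
      by_cases hb' : ∃ i, u ∈ U i ∧ u' ∈ U i
      · have : ¬ ∃ i, u' ∈ U i ∧ v ∈ U i := by
          rintro ⟨j, hj1, hj2⟩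
          obtain ⟨i, hi1, hi2⟩ := hb'
          have hij : i = j := by
            by_contra hne
            exact (hdisj i j hne).ne_of_mem hi2 hj1 rfl
          exact hnc ⟨i, hi1, hij ▸ hj2⟩
        have := hc'1 this
        omega
      · have := hb1 hb'
        omega
    · rw [SimpleGraph.Walk.support_cons, List.map_cons, List.sum_cons, List.length_cons]
      omega

/-- Transformation of a tree instance with pairwise disjoint cells into one of maximum
degree 3.  The new tree `T'` has a vertex `a_{u,v}` for every ordered pair of adjacent
vertices of `T` (the subtype `{p : V × V // T.Adj p.1 p.2}`): `a_{u,v}` and `a_{v,u}` are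
joined by an edge of length `λ(uv)` if `u,v` lie in a common cell `U i` and `λ(uv) − δ`
otherwise, and for each `u` the vertices `a_{u,v}` are connected into a path (given by an
enumeration `L u` of the neighbours of `u`) whose edges all have length `δ' = δ/(4n)`.
The cells become `U'ᵢ = {a_{u,v} : u ∈ Uᵢ}` and the site sets `S'ᵢ = {a_{u,v} : u ∈ Sᵢ}`.
If `0 < δ < res'(I)/(6n)`, the original instance has a solution iff the transformed
instance has a solution. -/
theorem degree_three_transform_solution_iff
    {V : Type*} [Fintype V] [DecidableEq V] (T : SimpleGraph V) (hT : T.IsTree)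
    (hn : 2 ≤ Fintype.card V)
    (w : Sym2 V → ℝ) (hw : ∀ e ∈ T.edgeSet, 0 < w e)
    (d : V → V → ℝ)
    (hd : ∀ (u v : V) (p : T.Walk u v), p.IsPath → (p.edges.map w).sum = d u v)
    (k : ℕ) (U S : Fin k → Set V)
    (hcover : (⋃ i, U i) = Set.univ)
    (hdisj : ∀ i j, i ≠ j → Disjoint (U i) (U j))
    (hUconn : ∀ i, (T.induce (U i)).Connected)
    (hSU : ∀ i, S i ⊆ U i)
    -- the resolution `res'(I)`: the minimum positive difference of distances
    (resI : ℝ)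
    (hres1 : ∀ v v' u : V, 0 < d v u - d v' u → resI ≤ d v u - d v' u)
    (hres2 : ∃ v v' u : V, 0 < d v u - d v' u ∧ resI = d v u - d v' u)
    (δ δ' : ℝ) (hδ : 0 < δ) (hδres : δ < resI / (6 * Fintype.card V))
    (hδ' : δ' = δ / (4 * Fintype.card V))
    -- an enumeration of the neighbours of each vertex
    (L : V → List V) (hLnd : ∀ u, (L u).Nodup) (hLmem : ∀ u v, v ∈ L u ↔ T.Adj u v)
    -- the transformed tree `T'`
    (T' : SimpleGraph {p : V × V // T.Adj p.1 p.2})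
    (hT'adj : ∀ a b : {p : V × V // T.Adj p.1 p.2}, T'.Adj a b ↔
      ((a.1.1 = b.1.2 ∧ a.1.2 = b.1.1) ∨
       (a.1.1 = b.1.1 ∧ (ConsecIn (L a.1.1) a.1.2 b.1.2 ∨ ConsecIn (L a.1.1) b.1.2 a.1.2))))
    -- its edge-lengths
    (w' : Sym2 {p : V × V // T.Adj p.1 p.2} → ℝ)
    (hwsame : ∀ a b : {p : V × V // T.Adj p.1 p.2}, a.1.1 = b.1.2 → a.1.2 = b.1.1 →
      (∃ i, a.1.1 ∈ U i ∧ a.1.2 ∈ U i) → w' s(a, b) = w s(a.1.1, a.1.2))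
    (hwdiff : ∀ a b : {p : V × V // T.Adj p.1 p.2}, a.1.1 = b.1.2 → a.1.2 = b.1.1 →
      (¬ ∃ i, a.1.1 ∈ U i ∧ a.1.2 ∈ U i) → w' s(a, b) = w s(a.1.1, a.1.2) - δ)
    (hwpath : ∀ a b : {p : V × V // T.Adj p.1 p.2}, a.1.1 = b.1.1 → a ≠ b →
      w' s(a, b) = δ')
    -- its tree distance
    (d' : {p : V × V // T.Adj p.1 p.2} → {p : V × V // T.Adj p.1 p.2} → ℝ)
    (hd' : ∀ (a b : {p : V × V // T.Adj p.1 p.2}) (p : T'.Walk a b), p.IsPath →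
      (p.edges.map w').sum = d' a b) :
    (∃ st : Fin k → V, ∀ i, st i ∈ S i ∧ {v | ∀ j, d (st i) v ≤ d (st j) v} = U i) ↔
      (∃ st' : Fin k → {p : V × V // T.Adj p.1 p.2}, ∀ i,
        (st' i).1.1 ∈ S i ∧
        {a : {p : V × V // T.Adj p.1 p.2} | ∀ j, d' (st' i) a ≤ d' (st' j) a} =
          {a : {p : V × V // T.Adj p.1 p.2} | a.1.1 ∈ U i}) := by
  classical
  set N : ℝ := (Fintype.card V : ℝ) with hN
  have hN2 : (2 : ℝ) ≤ N := by rw [hN]; exact_mod_cast hn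
  have hNpos : (0 : ℝ) < N := by linarith
  have hresbig : 6 * N * δ < resI := by
    rw [lt_div_iff₀ (by positivity)] at hδres
    linarith [hδres]
  have hδ'pos : 0 < δ' := by rw [hδ']; positivity
  have hrefl : ∀ z : V, ∃ i, z ∈ U i := by
    intro z
    have : z ∈ ⋃ i, U i := hcover ▸ Set.mem_univ z
    exact Set.mem_iUnion.1 this
  -- every vertex has a neighbour
  have nb : ∀ v : V, ∃ y, T.Adj v y := by
    intro v
    obtain ⟨u, hu⟩ := Fintype.exists_ne_of_one_lt_card (by omega) v
    obtain ⟨p⟩ := (hT.isConnected.preconnected v u).symm.symm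
    cases p with
    | nil => exact absurd rfl hu.symm
    | cons h _ => exact ⟨_, h⟩
  -- paths exist
  have pathex : ∀ u v : V, ∃ p : T.Walk u v, p.IsPath := by
    intro u v
    obtain ⟨p⟩ := hT.isConnected.preconnected u v
    exact ⟨p.toPath, p.toPath.2⟩
  -- within-cell paths
  have cellpath : ∀ (i : Fin k) (u v : V), u ∈ U i → v ∈ U i →
      ∃ p : T.Walk u v, p.IsPath ∧ ∀ z ∈ p.support, z ∈ U i := by
    intro i u v hu hv
    obtain ⟨W⟩ := (hUconn i).preconnected ⟨u, hu⟩ ⟨v, hv⟩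
    let hom : T.induce (U i) →g T := ⟨fun z => z.1, fun h => h⟩
    refine ⟨((W.map hom).copy rfl rfl).toPath.1, ((W.map hom).copy rfl rfl).toPath.2, ?_⟩
    intro z hz
    have hz' : z ∈ ((W.map hom).copy rfl rfl).support :=
      SimpleGraph.Walk.support_toPath_subset _ hz
    rw [SimpleGraph.Walk.support_copy, SimpleGraph.Walk.support_map] at hz'
    obtain ⟨z', _, rfl⟩ := List.mem_map.1 hz'
    exact z'.2
  -- degree sum bound
  have hdeg : ∀ z : V, (L z).length = T.degree z := by
    intro z
    rw [← List.toFinset_card_of_nodup (hLnd z)]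
    congr 1
    ext y
    simp [hLmem]
  have suppsum : ∀ (u v : V) (p : T.Walk u v), p.IsPath →
      (p.support.map fun z => (L z).length).sum ≤ 2 * (Fintype.card V - 1) := by
    intro u v p hp
    have h1 : (p.support.map fun z => (L z).length).sum
        = ∑ z ∈ p.support.toFinset, (L z).length :=
      (List.sum_toFinset _ (hp.support_nodup)).symm
    rw [h1]
    calc ∑ z ∈ p.support.toFinset, (L z).length
        ≤ ∑ z : V, (L z).length :=
          Finset.sum_le_sum_of_subset (Finset.subset_univ _)
      _ = ∑ z : V, T.degree z := by simp [hdeg]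
      _ = 2 * T.edgeFinset.card := T.sum_degrees_eq_twice_card_edges
      _ = 2 * (Fintype.card V - 1) := by
          have := hT.card_edgeFinset
          omega
  -- the distance formula
  have formula : ∀ (A B : {p : V × V // T.Adj p.1 p.2}) (p : T.Walk A.1.1 B.1.1),
      p.IsPath → ∃ (c : ℕ) (e : ℝ),
        d' A B = d A.1.1 B.1.1 - δ * c + e ∧ 0 ≤ e ∧ e < δ / 2 ∧ (c : ℝ) ≤ N - 1 ∧
        ((∀ dd ∈ p.darts, ∃ i, dd.toProd.1 ∈ U i ∧ dd.toProd.2 ∈ U i) → c = 0) ∧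
        ((¬ ∃ i, A.1.1 ∈ U i ∧ B.1.1 ∈ U i) → (1 : ℝ) ≤ c) := by
    intro A B p hp
    obtain ⟨q, c, G, hqpath, _, hqw, hclen, hc0, hc1, hG⟩ :=
      key_walk hcover hdisj L hLnd hLmem hT'adj w w' δ δ' hwsame hwdiff hwpath
        A.1.1 B.1.1 p hp A.1.2 B.1.2 A.2 B.2
    have hdval : (p.edges.map w).sum = d A.1.1 B.1.1 := hd _ _ p hp
    have hd'val : (q.edges.map w').sum = d' A B := hd' A B q hqpath
    refine ⟨c, δ' * G, by rw [← hd'val, hqw, hdval], by positivity, ?_, ?_, hc0, ?_⟩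
    · -- e < δ / 2
      have hlen : (G : ℝ) + 1 ≤ 2 * (N - 1) := by
        have h2 := suppsum _ _ p hp
        have h3 : G + 1 ≤ 2 * (Fintype.card V - 1) := by
          have := p.length_support
          omega
        have h4 : ((G + 1 : ℕ) : ℝ) ≤ ((2 * (Fintype.card V - 1) : ℕ) : ℝ) := by
          exact_mod_cast h3
        rw [hN]
        push_cast [Nat.cast_sub (by omega : 1 ≤ Fintype.card V)] at h4
        linarith
      rw [hδ']
      rw [div_mul_eq_mul_div, div_lt_iff₀ (by positivity)]
      nlinarith
    · -- c ≤ N - 1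
      have h2 : (c : ℝ) ≤ (p.length : ℝ) := by exact_mod_cast hclen
      have h4 : (p.length : ℝ) + 1 ≤ N := by
        have h5 : p.length + 1 ≤ Fintype.card V := hp.length_lt
        rw [hN]
        exact_mod_cast h5
      linarith
    · intro hnc
      have := hc1 hnc
      exact_mod_cast this
  -- generic perturbation bounds
  have cbound : ∀ (c : ℕ), (c : ℝ) ≤ N - 1 → δ * c ≤ δ * (N - 1) :=
    fun c hc => mul_le_mul_of_nonneg_left hc hδ.le
  constructor
  · -- forward
    rintro ⟨st, hst⟩
    choose xs hxs using fun i => nb (st i)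
    set A : Fin k → {p : V × V // T.Adj p.1 p.2} := fun i => ⟨(st i, xs i), hxs i⟩ with hA
    have strict : ∀ (i j : Fin k) (a : {p : V × V // T.Adj p.1 p.2}),
        a.1.1 ∈ U i → i ≠ j → d' (A i) a < d' (A j) a := by
      intro i j a hv hij
      have hvcell : ∀ j', d (st i) a.1.1 ≤ d (st j') a.1.1 :=
        (Set.ext_iff.1 (hst i).2 a.1.1).2 hv
      have hle : d (st i) a.1.1 ≤ d (st j) a.1.1 := hvcell j
      have hlt : d (st i) a.1.1 < d (st j) a.1.1 := by
        rcases lt_or_eq_of_le hle with h' | h'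
        · exact h'
        · exfalso
          have hvj : a.1.1 ∈ U j := by
            refine (Set.ext_iff.1 (hst j).2 a.1.1).1 ?_
            intro j'
            rw [← h']
            exact hvcell j'
          exact (hdisj i j hij).ne_of_mem hv hvj rfl
      have hgap : resI ≤ d (st j) a.1.1 - d (st i) a.1.1 :=
        hres1 (st j) (st i) a.1.1 (by linarith)
      obtain ⟨pi, hpi⟩ := pathex (st i) a.1.1
      obtain ⟨pj, hpj⟩ := pathex (st j) a.1.1
      obtain ⟨ci, ei, hdi, hei0, hei2, hcile, _, _⟩ := formula (A i) a pi hpi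
      obtain ⟨cj, ej, hdj, hej0, hej2, hcjle, _, _⟩ := formula (A j) a pj hpj
      have h1 := cbound ci hcile
      have h2 := cbound cj hcjle
      have h3 : 0 ≤ δ * (ci : ℝ) := by positivity
      have h4 : 0 ≤ δ * (cj : ℝ) := by positivity
      have h5 : 0 < N * δ := by positivity
      rw [hdi, hdj]
      linarith
    refine ⟨A, fun i => ⟨(hst i).1, ?_⟩⟩
    ext a
    simp only [Set.mem_setOf_eq]
    constructor
    · intro ha
      by_contra hvi
      obtain ⟨j, hvj⟩ := hrefl a.1.1
      have hji : j ≠ i := fun e => hvi (e ▸ hvj)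
      exact absurd (ha j) (not_le.2 (strict j i a hvj hji))
    · intro hv j
      rcases eq_or_ne i j with rfl | hij
      · exact le_refl _
      · exact (strict i j a hv hij).le
  · -- backward
    rintro ⟨st', hst'⟩
    have hstS : ∀ i, (st' i).1.1 ∈ S i := fun i => (hst' i).1
    have hstU : ∀ i, (st' i).1.1 ∈ U i := fun i => hSU i (hstS i)
    refine ⟨fun i => (st' i).1.1, fun i => ⟨hstS i, ?_⟩⟩
    ext v
    simp only [Set.mem_setOf_eq]
    constructor
    · intro hv
      by_contra hvi
      obtain ⟨j, hvj⟩ := hrefl v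
      have hji : j ≠ i := fun e => hvi (e ▸ hvj)
      obtain ⟨y, hy⟩ := nb v
      set a : {p : V × V // T.Adj p.1 p.2} := ⟨(v, y), hy⟩ with ha
      have hacell : ∀ j', d' (st' j) a ≤ d' (st' j') a :=
        (Set.ext_iff.1 (hst' j).2 a).2 hvj
      have hdji : d' (st' j) a ≤ d' (st' i) a := hacell i
      obtain ⟨pj, hpj, hpjmem⟩ := cellpath j (st' j).1.1 v (hstU j) hvj
      obtain ⟨cj, ej, hdj, hej0, hej2, _, hcj0, _⟩ := formula (st' j) a pj hpj
      have hcjz : cj = 0 := by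
        refine hcj0 ?_
        intro dd hdd
        exact ⟨j, hpjmem _ (SimpleGraph.Walk.dart_fst_mem_support_of_mem_darts _ hdd),
          hpjmem _ (SimpleGraph.Walk.dart_snd_mem_support_of_mem_darts _ hdd)⟩
      obtain ⟨pi, hpi⟩ := pathex (st' i).1.1 v
      obtain ⟨ci, ei, hdi, hei0, hei2, _, _, hci1⟩ := formula (st' i) a pi hpi
      have hci : (1 : ℝ) ≤ ci := by
        refine hci1 ?_
        rintro ⟨i', h1, h2⟩
        have : i' = i := by
          by_contra hne
          exact (hdisj i i' (fun e => hne e.symm)).ne_of_mem (hstU i) h1 rfl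
        exact hvi (this ▸ h2)
      have hδci : δ * 1 ≤ δ * (ci : ℝ) := mul_le_mul_of_nonneg_left hci hδ.le
      have hvlef := hv j
      rw [hdi, hdj, hcjz] at hdji
      push_cast at hdji
      linarith
    · intro hv j
      obtain ⟨y, hy⟩ := nb v
      set a : {p : V × V // T.Adj p.1 p.2} := ⟨(v, y), hy⟩ with ha
      have hacell : ∀ j', d' (st' i) a ≤ d' (st' j') a :=
        (Set.ext_iff.1 (hst' i).2 a).2 hv
      have hdij : d' (st' i) a ≤ d' (st' j) a := hacell j
      obtain ⟨pi, hpi⟩ := pathex (st' i).1.1 v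
      obtain ⟨pj, hpj⟩ := pathex (st' j).1.1 v
      obtain ⟨ci, ei, hdi, hei0, hei2, hcile, _, _⟩ := formula (st' i) a pi hpi
      obtain ⟨cj, ej, hdj, hej0, hej2, hcjle, _, _⟩ := formula (st' j) a pj hpj
      by_contra hcon
      push_neg at hcon
      have hgap : resI ≤ d (st' i).1.1 v - d (st' j).1.1 v :=
        hres1 (st' i).1.1 (st' j).1.1 v (by linarith)
      have h1 := cbound ci hcile
      have h2 := cbound cj hcjle
      have h3 : 0 ≤ δ * (ci : ℝ) := by positivity
      have h4 : 0 ≤ δ * (cj : ℝ) := by positivity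
      have h5 : 0 < N * δ := by positivity
      rw [hdi, hdj] at hdij
      linarith
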